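/- Let n, m be natural numbers, let α ≥ 1 be a real number, and let S be a finite subset of (ZMod 2)^n with |S| ≤ 2^(m-α). Then the probability, over a uniformly random pair (A, b) where A is an m×n matrix over ZMod 2 and b ∈ (ZMod 2)^m, that no x ∈ S satisfies A·x = b is at least 1 - 2^(-α). -/
import Mathlib


open Finset Filter
open scoped Classical

/-- Probability of event `P` over a uniformly random pair `(A, b)` with `A` an
`m × n` matrix over `ZMod 2` and `b : Fin m → ZMod 2`. -/
noncomputable def xorProb (n m : ℕ)
    (P : Matrix (Fin m) (Fin n) (ZMod 2) × (Fin m → ZMod 2) → Prop) : ℝ :=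
  (Finset.univ.filter P).card /
    Fintype.card (Matrix (Fin m) (Fin n) (ZMod 2) × (Fin m → ZMod 2))

/-- The random 1-CARD-XOR formula `ψ(n,k,m)` is satisfied by the pair `(A, b)`:
there is an assignment of Hamming weight at most `k` solving `A ⬝ x = b`. -/
def cardXorSat (n k m : ℕ)
    (ab : Matrix (Fin m) (Fin n) (ZMod 2) × (Fin m → ZMod 2)) : Prop :=
  ∃ x : Fin n → ZMod 2, hammingNorm x ≤ k ∧ ab.1.mulVec x = ab.2

/-- Probability that `ψ(n,k,m)` is satisfiable. -/
noncomputable def satProb (n k m : ℕ) : ℝ := xorProb n m (cardXorSat n k m)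

/-- Probability that `ψ(n,k,m)` is unsatisfiable. -/
noncomputable def unsatProb (n k m : ℕ) : ℝ := xorProb n m fun ab => ¬ cardXorSat n k m ab

/-- `#F(n,k) = ∑_{w=0}^{k} C(n,w)`, the number of solutions of the at-most-`k`
cardinality constraint on `n` variables. -/
def cardSum (n k : ℕ) : ℕ := ∑ w ∈ Finset.range (k + 1), n.choose w

/-- The binary entropy function (with `H 0 = H 1 = 0` by `logb` junk values). -/
noncomputable def binEnt (μ : ℝ) : ℝ :=
  -μ * Real.logb 2 μ - (1 - μ) * Real.logb 2 (1 - μ)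

set_option maxHeartbeats 2000000 in
theorem stmt1 (n m : ℕ) (α : ℝ) (hα : 1 ≤ α) (S : Finset (Fin n → ZMod 2))
    (hS : (S.card : ℝ) ≤ (2 : ℝ) ^ ((m : ℝ) - α)) :
    1 - (2 : ℝ) ^ (-α) ≤
      xorProb n m (fun ab => ∀ x ∈ S, ab.1.mulVec x ≠ ab.2) := by
  classical
  set M := Matrix (Fin m) (Fin n) (ZMod 2)
  set V := (Fin m → ZMod 2)
  have hcV : Fintype.card V = 2 ^ m := by
    simp [V]
  have key : ∀ x : Fin n → ZMod 2,
      (univ.filter (fun ab : M × V => ab.1.mulVec x = ab.2)).card = Fintype.card M := by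
    intro x
    have himg : (univ.filter (fun ab : M × V => ab.1.mulVec x = ab.2)) =
        Finset.image (fun A : M => (A, A.mulVec x)) univ := by
      ext ab
      simp only [mem_filter, mem_univ, true_and, mem_image]
      constructor
      · intro h; exact ⟨ab.1, by rw [h]⟩
      · rintro ⟨A, _, rfl⟩; rfl
    rw [himg, Finset.card_image_of_injective _ (fun A B hAB => (Prod.mk.injEq _ _ _ _ ▸ hAB).1),
      Finset.card_univ]
  set P : M × V → Prop := fun ab => ∀ x ∈ S, ab.1.mulVec x ≠ ab.2 with hP
  have hsub : (univ.filter (fun ab : M × V => ¬ P ab)) ⊆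
      S.biUnion (fun x => univ.filter (fun ab : M × V => ab.1.mulVec x = ab.2)) := by
    intro ab hab
    simp only [mem_filter, mem_univ, true_and, hP] at hab
    push_neg at hab
    obtain ⟨x, hx, hx2⟩ := hab
    exact mem_biUnion.2 ⟨x, hx, by simp [hx2]⟩
  have hbad : ((univ.filter (fun ab : M × V => ¬ P ab)).card : ℝ) ≤
      S.card * Fintype.card M := by
    have h1 := Finset.card_le_card hsub
    have h2 := Finset.card_biUnion_le (s := S)
      (t := fun x => univ.filter (fun ab : M × V => ab.1.mulVec x = ab.2))
    have h3 : ∑ x ∈ S, (univ.filter (fun ab : M × V => ab.1.mulVec x = ab.2)).card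
        = S.card * Fintype.card M := by
      simp [key, mul_comm]
    have := h1.trans (h2.trans_eq h3)
    exact_mod_cast this
  have hsplit := Finset.card_filter_add_card_filter_not (s := (univ : Finset (M × V))) P
  have hcard : Fintype.card (M × V) = Fintype.card M * 2 ^ m := by
    rw [Fintype.card_prod, hcV]
  have hN : (0 : ℝ) < Fintype.card (M × V) := by positivity
  have hgood : ((Fintype.card (M × V) : ℝ)) - S.card * Fintype.card M ≤
      ((univ.filter P).card : ℝ) := by
    have : ((univ.filter P).card : ℝ) + ((univ.filter (fun ab => ¬ P ab)).card : ℝ)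
        = Fintype.card (M × V) := by
      exact_mod_cast hsplit.trans (Finset.card_univ)
    linarith
  have hSb : (S.card : ℝ) * Fintype.card M ≤ (2:ℝ)^(-α) * Fintype.card (M × V) := by
    have h2m : ((2:ℕ)^m : ℝ) = (2:ℝ) ^ (m:ℝ) := by
      rw [Real.rpow_natCast]; push_cast; ring
    have hsplit2 : (2:ℝ) ^ ((m:ℝ) - α) = (2:ℝ)^(-α) * (2:ℝ)^(m:ℝ) := by
      rw [← Real.rpow_add (by norm_num)]; ring_nf
    have hcMnn : (0:ℝ) ≤ Fintype.card M := by positivity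
    calc (S.card : ℝ) * Fintype.card M ≤ (2:ℝ) ^ ((m:ℝ) - α) * Fintype.card M :=
          mul_le_mul_of_nonneg_right hS hcMnn
      _ = (2:ℝ)^(-α) * ((2:ℝ)^(m:ℝ) * Fintype.card M) := by rw [hsplit2]; ring
      _ = (2:ℝ)^(-α) * Fintype.card (M × V) := by
          rw [hcard]; push_cast; rw [← h2m]; push_cast; ring
  have hxor : xorProb n m (fun ab => ∀ x ∈ S, ab.1.mulVec x ≠ ab.2)
      = ((univ.filter P).card : ℝ) / (Fintype.card (M × V) : ℝ) := by
    rw [xorProb]; simp only [hP, Finset.filter_congr_decidable]; congr!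
  rw [hxor, le_div_iff₀ hN]
  have expand : (1 - (2:ℝ)^(-α)) * (Fintype.card (M × V):ℝ)
      = (Fintype.card (M × V):ℝ) - (2:ℝ)^(-α) * (Fintype.card (M × V):ℝ) := by ring
  rw [expand]
  linarith [hgood, hSb]
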